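/- Let ȳ ∈ ℝⁿ, let α be a class-K function, and let y : [0,+∞) → ℝⁿ be a Lipschitz continuous curve with bounded range such that the integrals Φ(T) := ∫₀ᵀ α(‖y(t)−ȳ‖) dt are bounded uniformly in T ≥ 0. Then y(t) → ȳ as t → +∞. -/

import Mathlib

open MeasureTheory Filter Topology Metric Set

/-- A class-K function: continuous, (strictly) increasing on `[0,∞)`, nonnegative,
vanishing at `0`. -/
def IsClassK (α : ℝ → ℝ) : Prop :=
  ContinuousOn α (Ici 0) ∧ StrictMonoOn α (Ici 0) ∧ α 0 = 0 ∧ ∀ s ∈ Ici (0:ℝ), 0 ≤ α s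

/-- If `y : [0,∞) → ℝⁿ` is Lipschitz with bounded range and the integrals
`Φ(T) = ∫₀ᵀ α(‖y(t)−ȳ‖) dt` are bounded uniformly in `T ≥ 0` for a class-K function `α`,
then `y(t) → ȳ` as `t → +∞`. -/
theorem lipschitz_bounded_dissipation_tendsto
    {n : ℕ} (ybar : EuclideanSpace ℝ (Fin n))
    (α : ℝ → ℝ) (hα : IsClassK α)
    (y : ℝ → EuclideanSpace ℝ (Fin n))
    (K : NNReal) (hLip : LipschitzOnWith K y (Ici 0))
    (b : ℝ) (hbnd : ∀ t, 0 ≤ t → ‖y t‖ ≤ b)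
    (M : ℝ) (hΦ : ∀ T, 0 ≤ T → (∫ t in (0:ℝ)..T, α ‖y t - ybar‖) ≤ M) :
    Tendsto y atTop (𝓝 ybar) := by
  obtain ⟨hαc, hαmono, hα0, hαpos⟩ := hα
  set f : ℝ → ℝ := fun t => α ‖y t - ybar‖ with hf
  have hyc : ContinuousOn y (Ici 0) := hLip.continuousOn
  have hfc : ContinuousOn f (Ici 0) := by
    apply hαc.comp ((hyc.sub continuousOn_const).norm)
    intro t _; exact norm_nonneg _
  have hfnn : ∀ t, 0 ≤ f t := fun t => hαpos _ (norm_nonneg _)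
  have hint : ∀ a c : ℝ, 0 ≤ a → a ≤ c → IntervalIntegrable f volume a c := by
    intro a c ha hac
    apply ContinuousOn.intervalIntegrable
    apply hfc.mono
    rw [uIcc_of_le hac]
    exact fun x hx => le_trans ha hx.1
  have hmonoΦ : ∀ a c : ℝ, 0 ≤ a → a ≤ c →
      (∫ t in (0:ℝ)..a, f t) ≤ ∫ t in (0:ℝ)..c, f t := by
    intro a c ha hac
    have h1 := intervalIntegral.integral_add_adjacent_intervals
      (hint 0 a le_rfl ha) (hint a c ha hac)
    rw [← h1]
    have : 0 ≤ ∫ t in a..c, f t :=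
      intervalIntegral.integral_nonneg hac (fun u _ => hfnn u)
    linarith
  by_contra h
  rw [Metric.tendsto_atTop] at h
  push_neg at h
  obtain ⟨ε, hε, hseq⟩ := h
  set K' : ℝ := max (K : ℝ) 1 with hK'
  have hK'pos : (0:ℝ) < K' := lt_of_lt_of_le one_pos (le_max_right _ _)
  set δ : ℝ := ε / (2 * K') with hδ
  have hδpos : 0 < δ := div_pos hε (by positivity)
  set c : ℝ := α (ε / 2) with hc
  have hcpos : 0 < c := by
    have := hαmono (self_mem_Ici) (by positivity : (0:ℝ) ≤ ε/2) (by positivity)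
    rwa [hα0] at this
  -- key: integral over a δ-interval after a bad time is at least c*δ
  have key : ∀ t0 : ℝ, 0 ≤ t0 → ε ≤ dist (y t0) ybar →
      c * δ ≤ ∫ t in t0..(t0 + δ), f t := by
    intro t0 ht0 hbad
    have hle : t0 ≤ t0 + δ := by linarith
    have hptwise : ∀ s ∈ Icc t0 (t0 + δ), c ≤ f s := by
      intro s hs
      have hs0 : (0:ℝ) ≤ s := le_trans ht0 hs.1
      have hd : dist (y s) (y t0) ≤ ε / 2 := by
        have h1 : dist (y s) (y t0) ≤ K * dist s t0 := hLip.dist_le_mul s hs0 t0 ht0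
        have h2 : dist s t0 ≤ δ := by
          rw [Real.dist_eq, abs_of_nonneg (by linarith [hs.1])]
          linarith [hs.2]
        have h3 : (K:ℝ) * dist s t0 ≤ K' * δ := by
          apply mul_le_mul (le_max_left _ _) h2 dist_nonneg (le_of_lt hK'pos)
        have h4 : K' * δ = ε / 2 := by
          rw [hδ]; field_simp
        linarith
      have hlow : ε / 2 ≤ ‖y s - ybar‖ := by
        have := dist_triangle (y t0) (y s) ybar
        rw [dist_comm (y t0) (y s)] at this
        have h5 : dist (y s) ybar = ‖y s - ybar‖ := dist_eq_norm _ _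
        linarith
      calc c = α (ε/2) := rfl
        _ ≤ α ‖y s - ybar‖ :=
            hαmono.monotoneOn (by positivity : (0:ℝ) ≤ ε/2) (norm_nonneg _) hlow
        _ = f s := rfl
    have hconst : (∫ _ in t0..(t0+δ), c) ≤ ∫ t in t0..(t0+δ), f t := by
      apply intervalIntegral.integral_mono_on hle intervalIntegrable_const
        (hint t0 (t0+δ) ht0 hle) hptwise
    rw [intervalIntegral.integral_const, smul_eq_mul] at hconst
    have : (t0 + δ - t0) * c = c * δ := by ring
    linarith [hconst, this ▸ hconst]
  -- induction: integrals grow without bound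
  have grow : ∀ N : ℕ, ∃ T, 0 ≤ T ∧ (N:ℝ) * (c * δ) ≤ ∫ t in (0:ℝ)..T, f t := by
    intro N
    induction N with
    | zero =>
      exact ⟨0, le_rfl, by simp⟩
    | succ k ih =>
      obtain ⟨T, hT, hI⟩ := ih
      obtain ⟨t0, ht0T, hbad⟩ := hseq (max T 0)
      have ht00 : 0 ≤ t0 := le_trans (le_max_right _ _) ht0T
      have hTt0 : T ≤ t0 := le_trans (le_max_left _ _) ht0T
      refine ⟨t0 + δ, by linarith, ?_⟩
      have h1 := intervalIntegral.integral_add_adjacent_intervals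
        (hint 0 t0 le_rfl ht00) (hint t0 (t0+δ) ht00 (by linarith))
      have h2 := hmonoΦ T t0 hT hTt0
      have h3 := key t0 ht00 hbad
      push_cast
      rw [← h1]
      nlinarith
  obtain ⟨N, hN⟩ := exists_nat_gt (M / (c * δ))
  obtain ⟨T, hT, hI⟩ := grow N
  have hM : M < (N:ℝ) * (c * δ) := by
    rw [div_lt_iff₀ (by positivity)] at hN
    linarith
  linarith [hΦ T hT, hI]
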